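/- Let 0<τ1<τ2<1 and let λ≥0 be a common tuning parameter. If θ̂^{τ1}∈S^{τ1} and θ̂^{τ2}∈S^{τ2} are any quantile TVD solutions at levels τ1 and τ2 respectively, then θ̂^{τ1}_i ≤ θ̂^{τ2}_i for every i∈[1:n]; i.e., quantile TVD solutions at different levels with a common tuning parameter never cross. -/

import Mathlib

open scoped BigOperators

noncomputable section

namespace QTVD

/-- Quantile (check) loss `ρ_τ(x) = max{τx, (τ-1)x}`. -/
def qloss (τ x : ℝ) : ℝ := max (τ * x) ((τ - 1) * x)

/-- Total variation `TV(θ) = ∑ |θ_{i+1} - θ_i|` (coordinates indexed `0,…,n-1`). -/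
def TV {n : ℕ} (θ : Fin n → ℝ) : ℝ :=
  ∑ i : Fin n, if h : (i : ℕ) + 1 < n then |θ ⟨(i : ℕ) + 1, h⟩ - θ i| else 0

/-- Quantile TVD objective. -/
def obj {n : ℕ} (τ lam : ℝ) (y θ : Fin n → ℝ) : ℝ :=
  (∑ i : Fin n, qloss τ (y i - θ i)) + lam * TV θ

/-- Quantile TVD solution set `S^τ`. -/
def sol {n : ℕ} (τ lam : ℝ) (y : Fin n → ℝ) : Set (Fin n → ℝ) :=
  {θ | ∀ η : Fin n → ℝ, obj τ lam y θ ≤ obj τ lam y η}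

/-- `k`-th smallest entry of `y` restricted to `I` (as extended real;
`⊥` if `k ≤ 0`, `⊤` if `k ≥ |I| + 1`). -/
def orderStat {n : ℕ} (y : Fin n → ℝ) (I : Finset (Fin n)) (k : ℤ) : EReal :=
  if k ≤ 0 then ⊥
  else if (I.card : ℤ) < k then ⊤
  else (((I.val.map y).sort (· ≤ ·)).getD (k.toNat - 1) 0 : ℝ)

/-- The constant `C_{I,J}` for discrete intervals `I=[c:d] ⊆ J=[a:b] ⊆ [0:n-1]`
(0-based indexing; 1-based `[s:t] ⊆ [j1:j2] ⊆ [1:n]` corresponds to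
`c = s-1, d = t-1, a = j1-1, b = j2-1`). -/
def Cconst (n c d a b : ℕ) : ℝ :=
  if 0 < a ∧ b < n - 1 then
    if a < c ∧ d < b then 1 else if c = a ∧ d = b then -1 else 0
  else if a = 0 ∧ b < n - 1 then
    if a < c ∧ d < b then 1 else if c = a ∧ d = b then -(1/2)
      else if c = 0 ∧ d < b then 1/2 else 0
  else if 0 < a ∧ b = n - 1 then
    if a < c ∧ d < b then 1 else if c = a ∧ d = b then -(1/2)
      else if a < c ∧ d = b then 1/2 else 0
  else
    if a < c ∧ d < b then 1 else if c = a ∧ d = b then 0 else 1/2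

/-- `u^τ_{I,J} = τ|I| - 2λ C_{I,J}` for `I=[c:d] ⊆ J=[a:b]`. -/
def uIJ (τ lam : ℝ) (n c d a b : ℕ) : ℝ :=
  τ * ((d : ℝ) - (c : ℝ) + 1) - 2 * lam * Cconst n c d a b

/-- `l^τ_{I,J} = τ|I| + 2λ C_{I,J}` for `I=[c:d] ⊆ J=[a:b]`. -/
def lIJ (τ lam : ℝ) (n c d a b : ℕ) : ℝ :=
  τ * ((d : ℝ) - (c : ℝ) + 1) + 2 * lam * Cconst n c d a b

/-- Upper envelope `U^τ_i`: min over intervals `J ∋ i` of the max over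
subintervals `I ⊆ J` with `i ∈ I` of `y_{I,(⌊u^τ_{I,J}⌋+1)}`. -/
def Uenv {n : ℕ} (τ lam : ℝ) (y : Fin n → ℝ) (i : Fin n) : EReal :=
  ⨅ (a : Fin n) (b : Fin n) (_ : a ≤ i) (_ : i ≤ b),
    ⨆ (c : Fin n) (d : Fin n) (_ : a ≤ c) (_ : c ≤ i) (_ : i ≤ d) (_ : d ≤ b),
      orderStat y (Finset.Icc c d) (⌊uIJ τ lam n (c : ℕ) (d : ℕ) (a : ℕ) (b : ℕ)⌋ + 1)

/-- Lower envelope `L^τ_i`: max over intervals `J ∋ i` of the min over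
subintervals `I ⊆ J` with `i ∈ I` of `y_{I,(⌈l^τ_{I,J}⌉)}`. -/
def Lenv {n : ℕ} (τ lam : ℝ) (y : Fin n → ℝ) (i : Fin n) : EReal :=
  ⨆ (a : Fin n) (b : Fin n) (_ : a ≤ i) (_ : i ≤ b),
    ⨅ (c : Fin n) (d : Fin n) (_ : a ≤ c) (_ : c ≤ i) (_ : i ≤ d) (_ : d ≤ b),
      orderStat y (Finset.Icc c d) ⌈lIJ τ lam n (c : ℕ) (d : ℕ) (a : ℕ) (b : ℕ)⌉

/-- Admissible dual (KKT) variables `(g, z)` for a candidate solution `θ`.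
`z` is indexed by `Fin (n+1)` (so `z 0,…,z n` with `z 0 = z n = 0`); the
edge between coordinates `j` and `j+1` (0-based) corresponds to `z (j+1)`. -/
def IsDual {n : ℕ} (τ lam : ℝ) (y θ : Fin n → ℝ) (g : Fin n → ℝ)
    (z : Fin (n + 1) → ℝ) : Prop :=
  z 0 = 0 ∧ z (Fin.last n) = 0 ∧
  (∀ j : Fin n, ∀ h : (j : ℕ) + 1 < n,
    (θ ⟨(j : ℕ) + 1, h⟩ < θ j → z j.succ = lam) ∧
    (θ j = θ ⟨(j : ℕ) + 1, h⟩ → -lam ≤ z j.succ ∧ z j.succ ≤ lam) ∧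
    (θ j < θ ⟨(j : ℕ) + 1, h⟩ → z j.succ = -lam)) ∧
  (∀ j : Fin n,
    (θ j < y j → g j = -τ) ∧
    (θ j = y j → -τ ≤ g j ∧ g j ≤ 1 - τ) ∧
    (y j < θ j → g j = 1 - τ)) ∧
  (∀ a b : Fin n, a ≤ b → (∑ j ∈ Finset.Icc a b, g j) = z a.castSucc - z b.succ)

/-- `sign_+(x) = 1` if `x ≥ 0`, `-1` if `x < 0`. -/
def signP (x : ℝ) : ℝ := if 0 ≤ x then 1 else -1

/-- `sign_-(x) = 1` if `x > 0`, `-1` if `x ≤ 0`. -/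
def signM (x : ℝ) : ℝ := if 0 < x then 1 else -1

/-- Submodularity with respect to the coordinatewise lattice structure on `ℝ^n`. -/
def Submodular {n : ℕ} (P : (Fin n → ℝ) → ℝ) : Prop :=
  ∀ x y : Fin n → ℝ, P (x ⊔ y) + P (x ⊓ y) ≤ P x + P y

/-- Penalized quantile regression objective with a general penalty `P`. -/
def Gobj {n : ℕ} (τ lam : ℝ) (y : Fin n → ℝ) (P : (Fin n → ℝ) → ℝ)
    (θ : Fin n → ℝ) : ℝ :=
  (∑ j : Fin n, qloss τ (y j - θ j)) + lam * P θ

end QTVD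

namespace NCAux

open QTVD

lemma qloss_eq (τ x : ℝ) : QTVD.qloss τ x = τ * x + max 0 (-x) := by
  unfold QTVD.qloss
  rcases le_total 0 x with h | h
  · rw [max_eq_left (by nlinarith : (τ - 1) * x ≤ τ * x),
      max_eq_left (by linarith : -x ≤ 0)]
    ring
  · rw [max_eq_right (by nlinarith : τ * x ≤ (τ - 1) * x),
      max_eq_right (by linarith : (0:ℝ) ≤ -x)]
    ring

lemma key_abs (a b c d : ℝ) :
    |max a b - max c d| + |min a b - min c d| ≤ |a - c| + |b - d| := by
  rcases le_total a b with h1 | h1 <;> rcases le_total c d with h2 | h2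
  · rw [max_eq_right h1, max_eq_right h2, min_eq_left h1, min_eq_left h2]
    linarith
  · rw [max_eq_right h1, max_eq_left h2, min_eq_left h1, min_eq_right h2]
    rcases abs_cases (b - c) with ⟨e1, _⟩ | ⟨e1, _⟩ <;>
      rcases abs_cases (a - d) with ⟨e2, _⟩ | ⟨e2, _⟩ <;>
      [skip; skip; skip; skip] <;>
      linarith [le_abs_self (a - c), neg_abs_le (a - c),
        le_abs_self (b - d), neg_abs_le (b - d)]
  · rw [max_eq_left h1, max_eq_right h2, min_eq_right h1, min_eq_left h2]
    rcases abs_cases (a - d) with ⟨e1, _⟩ | ⟨e1, _⟩ <;>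
      rcases abs_cases (b - c) with ⟨e2, _⟩ | ⟨e2, _⟩ <;>
      [skip; skip; skip; skip] <;>
      linarith [le_abs_self (a - c), neg_abs_le (a - c),
        le_abs_self (b - d), neg_abs_le (b - d)]
  · rw [max_eq_left h1, max_eq_left h2, min_eq_right h1, min_eq_right h2]

lemma tv_submod {n : ℕ} (x y : Fin n → ℝ) :
    QTVD.TV (x ⊔ y) + QTVD.TV (x ⊓ y) ≤ QTVD.TV x + QTVD.TV y := by
  unfold QTVD.TV
  rw [← Finset.sum_add_distrib, ← Finset.sum_add_distrib]
  apply Finset.sum_le_sum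
  intro i _
  by_cases h : (i : ℕ) + 1 < n
  · simp only [dif_pos h, Pi.sup_apply, Pi.inf_apply]
    exact key_abs _ _ _ _
  · simp [h]

lemma ptwise_le (τ₁ τ₂ : ℝ) (hτ : τ₁ ≤ τ₂) (yr a b : ℝ) :
    QTVD.qloss τ₁ (yr - min a b) + QTVD.qloss τ₂ (yr - max a b)
      ≤ QTVD.qloss τ₁ (yr - a) + QTVD.qloss τ₂ (yr - b) := by
  rcases le_total a b with h | h
  · rw [min_eq_left h, max_eq_right h]
  · rw [min_eq_right h, max_eq_left h]
    simp only [qloss_eq]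
    nlinarith [mul_nonneg (sub_nonneg.2 hτ) (sub_nonneg.2 h)]

lemma ptwise_lt (τ₁ τ₂ : ℝ) (hτ : τ₁ < τ₂) (yr a b : ℝ) (h : b < a) :
    QTVD.qloss τ₁ (yr - min a b) + QTVD.qloss τ₂ (yr - max a b)
      < QTVD.qloss τ₁ (yr - a) + QTVD.qloss τ₂ (yr - b) := by
  rw [min_eq_right h.le, max_eq_left h.le]
  simp only [qloss_eq]
  nlinarith [mul_pos (sub_pos.2 hτ) (sub_pos.2 h)]

end NCAux

/-- Non-crossing of quantile TVD across quantile levels.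
If `0 < τ₁ < τ₂ < 1` and a common tuning parameter `λ ≥ 0` is used, then any two
quantile TVD solutions at levels `τ₁` and `τ₂` never cross. -/
theorem quantile_tvd_noncrossing
    {n : ℕ} (τ₁ τ₂ lam : ℝ) (hτ1 : 0 < τ₁) (hτ12 : τ₁ < τ₂) (hτ2 : τ₂ < 1)
    (hlam : 0 ≤ lam) (y : Fin n → ℝ)
    (θ₁ : Fin n → ℝ) (hθ₁ : θ₁ ∈ QTVD.sol τ₁ lam y)
    (θ₂ : Fin n → ℝ) (hθ₂ : θ₂ ∈ QTVD.sol τ₂ lam y) :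
    ∀ i : Fin n, θ₁ i ≤ θ₂ i := by
  intro i0
  by_contra hc
  push_neg at hc
  have h1 := hθ₁ (θ₁ ⊓ θ₂)
  have h2 := hθ₂ (θ₁ ⊔ θ₂)
  simp only [QTVD.obj] at h1 h2
  have hsub := NCAux.tv_submod θ₁ θ₂
  have hlamsub : lam * (QTVD.TV (θ₁ ⊔ θ₂) + QTVD.TV (θ₁ ⊓ θ₂))
      ≤ lam * (QTVD.TV θ₁ + QTVD.TV θ₂) := mul_le_mul_of_nonneg_left hsub hlam
  have hsum : ∑ i : Fin n, (QTVD.qloss τ₁ (y i - (θ₁ ⊓ θ₂) i)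
        + QTVD.qloss τ₂ (y i - (θ₁ ⊔ θ₂) i))
      < ∑ i : Fin n, (QTVD.qloss τ₁ (y i - θ₁ i) + QTVD.qloss τ₂ (y i - θ₂ i)) := by
    apply Finset.sum_lt_sum
    · intro i _
      simp only [Pi.sup_apply, Pi.inf_apply]
      exact NCAux.ptwise_le τ₁ τ₂ hτ12.le (y i) (θ₁ i) (θ₂ i)
    · refine ⟨i0, Finset.mem_univ i0, ?_⟩
      simp only [Pi.sup_apply, Pi.inf_apply]
      exact NCAux.ptwise_lt τ₁ τ₂ hτ12 (y i0) (θ₁ i0) (θ₂ i0) hc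
  rw [Finset.sum_add_distrib, Finset.sum_add_distrib] at hsum
  linarith
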